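/- Let T be a nondegenerate triangle with vertices x₁, x₂, x₃ and barycentric coordinates λ₁, λ₂, λ₃. With ψₖ = 6λᵢλⱼ(xⱼ − xᵢ) and φₖ = λᵢ∇λⱼ − λⱼ∇λᵢ as defined for each edge (where {i,j,k} = {1,2,3}), the absolute value of the off-diagonal entries ∫_T ψₗ · φₘ dx (for ℓ ≠ m) equals |T|/10. -/

import Mathlib

open MeasureTheory
open scoped RealInnerProductSpace

section EBW_aux

-- 1D/2D integral computations over the reference triangle in ℝ × ℝ

def Ss : Set (ℝ × ℝ) := {z | 0 ≤ z.1 ∧ 0 ≤ z.2 ∧ z.1 + z.2 ≤ 1}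

lemma Ss_meas : MeasurableSet Ss := by
  apply MeasurableSet.inter (measurableSet_le measurable_const measurable_fst)
  exact MeasurableSet.inter (measurableSet_le measurable_const measurable_snd)
    (measurableSet_le (measurable_fst.add measurable_snd) measurable_const)

lemma Ss_compact : IsCompact Ss := by
  have hclosed : IsClosed Ss := by
    apply IsClosed.inter (isClosed_le continuous_const continuous_fst)
    exact IsClosed.inter (isClosed_le continuous_const continuous_snd)
      (isClosed_le (continuous_fst.add continuous_snd) continuous_const)
  have hsub : Ss ⊆ Set.Icc ((0:ℝ),(0:ℝ)) (1,1) := by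
    rintro ⟨u,v⟩ ⟨h1,h2,h3⟩
    constructor <;> constructor <;> simp_all <;> linarith
  exact (isCompact_Icc.of_isClosed_subset hclosed hsub)

lemma EBW_slice (f : ℝ × ℝ → ℝ) (hf : Continuous f) :
    ∫ z in Ss, f z = ∫ u in Set.Icc (0:ℝ) 1, ∫ v in Set.Icc (0:ℝ) (1-u), f (u, v) := by
  have hInt : Integrable (Ss.indicator f) :=
    (hf.continuousOn.integrableOn_compact Ss_compact).integrable_indicator Ss_meas
  rw [← integral_indicator Ss_meas]
  rw [show (volume : Measure (ℝ × ℝ)) = (volume : Measure ℝ).prod volume from rfl] at hInt ⊢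
  rw [MeasureTheory.integral_prod _ hInt]
  rw [← integral_indicator (measurableSet_Icc : MeasurableSet (Set.Icc (0:ℝ) 1))]
  congr 1; funext u
  by_cases hu : u ∈ Set.Icc (0:ℝ) 1
  · rw [Set.indicator_of_mem hu]
    have : ∀ v : ℝ, Ss.indicator f (u, v) = (Set.Icc (0:ℝ) (1-u)).indicator (fun v => f (u,v)) v := by
      intro v
      by_cases hv : v ∈ Set.Icc (0:ℝ) (1-u)
      · rw [Set.indicator_of_mem hv, Set.indicator_of_mem]
        exact ⟨hu.1, hv.1, by have := hv.2; linarith⟩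
      · rw [Set.indicator_of_notMem hv, Set.indicator_of_notMem]
        intro hmem
        exact hv ⟨hmem.2.1, by have := hmem.2.2; linarith⟩
    simp_rw [this]
    exact integral_indicator measurableSet_Icc
  · rw [Set.indicator_of_notMem hu]
    have : ∀ v : ℝ, Ss.indicator f (u, v) = 0 := by
      intro v
      apply Set.indicator_of_notMem
      intro hmem
      rcases hmem with ⟨h1, h2, h3⟩
      simp only [Set.mem_Icc, not_and_or, not_le] at hu
      rcases hu with h | h
      · linarith
      · linarith
    simp_rw [this, integral_zero]

lemma EBW_mono (c : ℝ) (n : ℕ) (b : ℝ) :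
    ∫ v in (0:ℝ)..b, c * v ^ n = c * b^(n+1)/(n+1) := by
  rw [intervalIntegral.integral_const_mul, integral_pow]
  norm_num; ring

lemma EBW_ii (c : ℝ) (n : ℕ) (a' b : ℝ) :
    IntervalIntegrable (fun v : ℝ => c * v ^ n) volume a' b :=
  (continuous_const.mul (continuous_pow n)).intervalIntegrable _ _

lemma EBW_inner_poly (u : ℝ) (h : (0:ℝ) ≤ 1 - u) :
    (∫ v in Set.Icc (0:ℝ) (1-u), (u*v*(1-u-v))) = u*(1-u)^3/6 := by
  rw [MeasureTheory.integral_Icc_eq_integral_Ioc, ← intervalIntegral.integral_of_le h]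
  have e : ∀ v : ℝ, u*v*(1-u-v) = (u*(1-u))*v^1 - u*v^2 := fun v => by ring
  simp_rw [e]
  rw [intervalIntegral.integral_sub (EBW_ii _ _ _ _) (EBW_ii _ _ _ _), EBW_mono, EBW_mono]
  norm_num; ring

lemma EBW_inner_one (u : ℝ) (h : (0:ℝ) ≤ 1 - u) :
    (∫ _ in Set.Icc (0:ℝ) (1-u), (1:ℝ)) = 1-u := by
  simp [Real.volume_Icc, ENNReal.toReal_ofReal h]
  linarith

lemma EBW_outer_one : (∫ u in Set.Icc (0:ℝ) 1, (1-u)) = 1/2 := by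
  rw [MeasureTheory.integral_Icc_eq_integral_Ioc,
    ← intervalIntegral.integral_of_le (by norm_num : (0:ℝ) ≤ 1)]
  have e : ∀ u : ℝ, 1-u = 1*u^0 - 1*u^1 := fun u => by ring
  simp_rw [e]
  rw [intervalIntegral.integral_sub (EBW_ii _ _ _ _) (EBW_ii _ _ _ _), EBW_mono, EBW_mono]
  norm_num

lemma EBW_outer_poly : (∫ u in Set.Icc (0:ℝ) 1, (u*(1-u)^3/6)) = 1/120 := by
  rw [MeasureTheory.integral_Icc_eq_integral_Ioc,
    ← intervalIntegral.integral_of_le (by norm_num : (0:ℝ) ≤ 1)]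
  have e : ∀ u : ℝ, u*(1-u)^3/6 = ((1/6)*u^1 - (1/2)*u^2) + ((1/2)*u^3 - (1/6)*u^4) :=
    fun u => by ring
  simp_rw [e]
  rw [intervalIntegral.integral_add ((EBW_ii _ _ _ _).sub (EBW_ii _ _ _ _))
        ((EBW_ii _ _ _ _).sub (EBW_ii _ _ _ _)),
      intervalIntegral.integral_sub (EBW_ii _ _ _ _) (EBW_ii _ _ _ _),
      intervalIntegral.integral_sub (EBW_ii _ _ _ _) (EBW_ii _ _ _ _),
      EBW_mono, EBW_mono, EBW_mono, EBW_mono]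
  norm_num

lemma EBW_S_one : ∫ _ in Ss, (1:ℝ) = 1/2 := by
  rw [EBW_slice _ continuous_const,
    MeasureTheory.setIntegral_congr_fun measurableSet_Icc
      (fun u hu => EBW_inner_one u (by linarith [(Set.mem_Icc.mp hu).2])),
    EBW_outer_one]

lemma EBW_S_poly : ∫ z in Ss, (z.1*z.2*(1-z.1-z.2)) = 1/120 := by
  rw [EBW_slice _ (by continuity),
    MeasureTheory.setIntegral_congr_fun measurableSet_Icc
      (fun u hu => EBW_inner_poly u (by linarith [(Set.mem_Icc.mp hu).2])),
    EBW_outer_poly]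

-- the sign bookkeeping

def Qf (i : Fin 3) (u v : ℝ) : ℝ := if i = 0 then u else if i = 1 then v else 1 - u - v
def Sf (a b i : Fin 3) : ℝ := (if i = b then 1 else 0) - (if i = a then 1 else 0)

set_option maxHeartbeats 2000000 in
lemma EBW_key (l m a b c d : Fin 3) (hlm : l ≠ m) (hab : a ≠ b) (hal : a ≠ l) (hbl : b ≠ l)
    (hcd : c ≠ d) (hcm : c ≠ m) (hdm : d ≠ m) :
    ∃ e : ℝ, |e| = 1 ∧ ∀ u v : ℝ,
      Qf a u v * Qf b u v * (Qf c u v * Sf a b d - Qf d u v * Sf a b c)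
        = e * (u * v * (1 - u - v)) := by
  fin_cases l <;> fin_cases m <;> fin_cases a <;> fin_cases b <;> fin_cases c <;> fin_cases d <;>
    first
      | exact absurd rfl hlm
      | exact absurd rfl hab
      | exact absurd rfl hal
      | exact absurd rfl hbl
      | exact absurd rfl hcd
      | exact absurd rfl hcm
      | exact absurd rfl hdm
      | (refine ⟨1, by norm_num, fun u v => ?_⟩
         simp (config := { decide := true }) only [Qf, Sf, if_true, if_false]
         ring1)
      | (refine ⟨-1, by norm_num, fun u v => ?_⟩
         simp (config := { decide := true }) only [Qf, Sf, if_true, if_false]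
         ring1)

-- transfer to EuclideanSpace

noncomputable def EBW_equiv : EuclideanSpace ℝ (Fin 2) ≃ᵐ ℝ × ℝ :=
  (MeasurableEquiv.toLp 2 (Fin 2 → ℝ)).symm.trans (MeasurableEquiv.finTwoArrow)

lemma EBW_equiv_mp : MeasurePreserving EBW_equiv volume volume :=
  (EuclideanSpace.volume_preserving_symm_measurableEquiv_toLp (Fin 2)).trans
    (volume_preserving_finTwoArrow ℝ)

noncomputable def EBW_T0 : Set (EuclideanSpace ℝ (Fin 2)) := ⇑EBW_equiv ⁻¹' Ss

lemma EBW_T0_meas : MeasurableSet EBW_T0 := EBW_equiv.measurable Ss_meas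

lemma EBW_transfer (h : EuclideanSpace ℝ (Fin 2) → ℝ) :
    ∫ p in EBW_T0, h p = ∫ z in Ss, h (EBW_equiv.symm z) := by
  have := EBW_equiv_mp.setIntegral_preimage_emb EBW_equiv.measurableEmbedding
    (fun z => h (EBW_equiv.symm z)) Ss
  simpa [EBW_T0] using this

lemma EBW_T0_volume : (volume EBW_T0).toReal = 1/2 := by
  have h1 : ∫ _ in EBW_T0, (1:ℝ) = (volume EBW_T0).toReal := by
    simp [setIntegral_const, Measure.real]
  rw [← h1, EBW_transfer (fun _ => (1:ℝ)), EBW_S_one]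

noncomputable def EBW_e0 : EuclideanSpace ℝ (Fin 2) := EuclideanSpace.single 0 1
noncomputable def EBW_e1 : EuclideanSpace ℝ (Fin 2) := EuclideanSpace.single 1 1

lemma EBW_T0_hull :
    EBW_T0 = convexHull ℝ {EBW_e0, EBW_e1, (0 : EuclideanSpace ℝ (Fin 2))} := by
  have hT0eq : EBW_T0 = {p : EuclideanSpace ℝ (Fin 2) | 0 ≤ p 0 ∧ 0 ≤ p 1 ∧ p 0 + p 1 ≤ 1} := by
    ext p; rfl
  rw [hT0eq]
  apply subset_antisymm
  · rintro p ⟨h0, h1, h2⟩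
    have hsum : ∑ i : Fin 3, (![p 0, p 1, 1 - p 0 - p 1]) i = 1 := by
      simp [Fin.sum_univ_three]
    have hmem := Finset.centerMass_mem_convexHull (Finset.univ : Finset (Fin 3))
      (s := {EBW_e0, EBW_e1, (0 : EuclideanSpace ℝ (Fin 2))})
      (w := ![p 0, p 1, 1 - p 0 - p 1])
      (fun i _ => by fin_cases i <;> simp <;> linarith)
      (by rw [hsum]; norm_num)
      (z := ![EBW_e0, EBW_e1, 0])
      (fun i _ => by fin_cases i <;> simp)
    rwa [Finset.centerMass_eq_of_sum_1 _ _ hsum, show ∑ i : Fin 3,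
        (![p 0, p 1, 1 - p 0 - p 1]) i • (![EBW_e0, EBW_e1, (0:EuclideanSpace ℝ (Fin 2))]) i = p
      from ?_] at hmem
    ext j
    simp only [Fin.sum_univ_three, Matrix.cons_val_zero, Matrix.cons_val_one, Matrix.head_cons,
      Matrix.cons_val_two, Matrix.tail_cons, PiLp.add_apply, PiLp.smul_apply, PiLp.zero_apply,
      smul_eq_mul, mul_zero, EBW_e0, EBW_e1, EuclideanSpace.single_apply]
    fin_cases j <;> simp
  · apply convexHull_min
    · rintro q (rfl | rfl | rfl) <;>
        simp [EBW_e0, EBW_e1, EuclideanSpace.single_apply]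
    · have hlin0 : IsLinearMap ℝ (fun p : EuclideanSpace ℝ (Fin 2) => p 0) :=
        ⟨fun _ _ => rfl, fun _ _ => rfl⟩
      have hlin1 : IsLinearMap ℝ (fun p : EuclideanSpace ℝ (Fin 2) => p 1) :=
        ⟨fun _ _ => rfl, fun _ _ => rfl⟩
      have hlin01 : IsLinearMap ℝ (fun p : EuclideanSpace ℝ (Fin 2) => p 0 + p 1) :=
        ⟨fun p q => by show (p+q) 0 + (p+q) 1 = _; simp [PiLp.add_apply]; ring, fun c p => by
          show (c • p) 0 + (c • p) 1 = c * (p 0 + p 1); simp [PiLp.smul_apply]; ring⟩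
      have : {p : EuclideanSpace ℝ (Fin 2) | 0 ≤ p 0 ∧ 0 ≤ p 1 ∧ p 0 + p 1 ≤ 1}
          = {p | 0 ≤ p 0} ∩ ({p | 0 ≤ p 1} ∩ {p | p 0 + p 1 ≤ 1}) := by
        ext p; simp [Set.mem_setOf_eq, Set.mem_inter_iff]
      rw [this]
      exact (convex_halfSpace_ge hlin0 0).inter
        ((convex_halfSpace_ge hlin1 0).inter (convex_halfSpace_le hlin01 1))

lemma EBW_vol_translate (a : EuclideanSpace ℝ (Fin 2)) (s : Set (EuclideanSpace ℝ (Fin 2))) :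
    volume ((fun y => a + y) '' s) = volume s := by
  have h : (fun y => a + y) '' s = (fun z => -a + z) ⁻¹' s := by
    ext y
    constructor
    · rintro ⟨z, hz, rfl⟩; simpa using hz
    · intro h; exact ⟨-a + y, h, by
        show a + (-a + y) = y; rw [← add_assoc, add_neg_cancel, zero_add]⟩
  rw [h, measure_preimage_add]

-- the affine change of variables

noncomputable def EBW_L (v w : EuclideanSpace ℝ (Fin 2)) :
    EuclideanSpace ℝ (Fin 2) →ₗ[ℝ] EuclideanSpace ℝ (Fin 2) where
  toFun p := p 0 • v + p 1 • w
  map_add' p q := by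
    show ((p + q) 0) • v + ((p + q) 1) • w = _
    simp only [PiLp.add_apply, add_smul]
    abel
  map_smul' c p := by
    show ((c • p) 0) • v + ((c • p) 1) • w = c • (p 0 • v + p 1 • w)
    simp only [PiLp.smul_apply, smul_eq_mul, mul_smul, smul_add]

noncomputable def EBW_A (x2 v w : EuclideanSpace ℝ (Fin 2)) :
    EuclideanSpace ℝ (Fin 2) →ᵃ[ℝ] EuclideanSpace ℝ (Fin 2) where
  toFun p := x2 + EBW_L v w p
  linear := EBW_L v w
  map_vadd' p vt := by
    show x2 + EBW_L v w (vt + p) = EBW_L v w vt + (x2 + EBW_L v w p)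
    rw [map_add]; abel

end EBW_aux

/-- The off-diagonal entries `∫_T ψₗ · φₘ dx` (for `ℓ ≠ m`) have absolute value
`|T|/10`, where `ψₗ = 6 λ_a λ_b (x_b - x_a)` is the edge bubble field for the edge
opposite `x_ℓ` and `φₘ = λ_c ∇λ_d - λ_d ∇λ_c` the Whitney form for the edge
opposite `x_m`. -/
theorem edge_bubble_whitney_offdiagonal (x : Fin 3 → EuclideanSpace ℝ (Fin 2))
    (hx : AffineIndependent ℝ x)
    (lam : Fin 3 → (EuclideanSpace ℝ (Fin 2) →ᵃ[ℝ] ℝ))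
    (hlam : ∀ i j, lam i (x j) = if i = j then 1 else 0)
    (g : Fin 3 → EuclideanSpace ℝ (Fin 2))
    (hg : ∀ i p, lam i p = lam i 0 + ⟪g i, p⟫)
    (l m a b c d : Fin 3) (hlm : l ≠ m)
    (hab : a ≠ b) (hal : a ≠ l) (hbl : b ≠ l)
    (hcd : c ≠ d) (hcm : c ≠ m) (hdm : d ≠ m) :
    |∫ p in convexHull ℝ (Set.range x),
        ⟪(6 * lam a p * lam b p) • (x b - x a),
          lam c p • g d - lam d p • g c⟫| =
      (volume (convexHull ℝ (Set.range x))).toReal / 10 := by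
  obtain ⟨e, he, hkey⟩ := EBW_key l m a b c d hlm hab hal hbl hcd hcm hdm
  -- basic inner-product identities for the gradients
  have hgi : ∀ i (p q : EuclideanSpace ℝ (Fin 2)), ⟪g i, p - q⟫ = lam i p - lam i q := by
    intro i p q
    rw [inner_sub_right]
    have hp := hg i p
    have hq := hg i q
    linarith
  have hgv : ∀ i j k : Fin 3, ⟪g i, x j - x k⟫
      = ((if i = j then (1:ℝ) else 0) - (if i = k then (1:ℝ) else 0)) := by
    intro i j k; rw [hgi, hlam, hlam]
  have hSv : ∀ i : Fin 3, ⟪x b - x a, g i⟫ = Sf a b i := by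
    intro i
    rw [real_inner_comm]
    exact (hgv i b a)
  -- the affine map
  have hlamA : ∀ i (p : EuclideanSpace ℝ (Fin 2)),
      lam i (EBW_A (x 2) (x 0 - x 2) (x 1 - x 2) p) = Qf i (p 0) (p 1) := by
    intro i p
    have h2 : lam i (EBW_A (x 2) (x 0 - x 2) (x 1 - x 2) p)
        = lam i 0 + (⟪g i, x 2⟫
            + (p 0 * ⟪g i, x 0 - x 2⟫ + p 1 * ⟪g i, x 1 - x 2⟫)) := by
      rw [hg i _]
      congr 1
      show ⟪g i, x 2 + (p 0 • (x 0 - x 2) + p 1 • (x 1 - x 2))⟫ = _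
      rw [inner_add_right, inner_add_right, real_inner_smul_right, real_inner_smul_right]
    have h3 : ⟪g i, x 2⟫ = lam i (x 2) - lam i 0 := by
      have := hg i (x 2); linarith
    rw [h2, h3, hgv i 0 2, hgv i 1 2, hlam i 2]
    fin_cases i <;>
      simp (config := { decide := true }) only [Qf, if_true, if_false] <;> ring
  -- pointwise form of the integrand
  have hF : ∀ p : EuclideanSpace ℝ (Fin 2),
      ⟪(6 * lam a p * lam b p) • (x b - x a), lam c p • g d - lam d p • g c⟫
        = 6 * (lam a p * lam b p * (lam c p * Sf a b d - lam d p * Sf a b c)) := by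
    intro p
    rw [real_inner_smul_left, inner_sub_right, real_inner_smul_right, real_inner_smul_right,
      hSv d, hSv c]
    ring
  -- injectivity
  have hAinj : Function.Injective (⇑(EBW_A (x 2) (x 0 - x 2) (x 1 - x 2))) := by
    intro p q hpq
    have hLpq : EBW_L (x 0 - x 2) (x 1 - x 2) p = EBW_L (x 0 - x 2) (x 1 - x 2) q :=
      add_left_cancel hpq
    have hco : ∀ i : Fin 3, p 0 * ⟪g i, x 0 - x 2⟫ + p 1 * ⟪g i, x 1 - x 2⟫
        = q 0 * ⟪g i, x 0 - x 2⟫ + q 1 * ⟪g i, x 1 - x 2⟫ := by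
      intro i
      have h : ⟪g i, p 0 • (x 0 - x 2) + p 1 • (x 1 - x 2)⟫
          = ⟪g i, q 0 • (x 0 - x 2) + q 1 • (x 1 - x 2)⟫ :=
        congrArg (fun y => ⟪g i, y⟫) hLpq
      simpa only [inner_add_right, real_inner_smul_right] using h
    have h0 := hco 0
    have h1 := hco 1
    rw [hgv 0 0 2, hgv 0 1 2] at h0
    rw [hgv 1 0 2, hgv 1 1 2] at h1
    simp (config := { decide := true }) only [if_true, if_false] at h0 h1
    norm_num at h0 h1
    ext j
    fin_cases j
    · exact h0
    · exact h1
  -- image of the reference triangle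
  have himg : convexHull ℝ (Set.range x)
      = ⇑(EBW_A (x 2) (x 0 - x 2) (x 1 - x 2)) '' EBW_T0 := by
    rw [EBW_T0_hull, AffineMap.image_convexHull]
    congr 1
    rw [Set.image_insert_eq, Set.image_insert_eq, Set.image_singleton]
    have h0 : EBW_A (x 2) (x 0 - x 2) (x 1 - x 2) EBW_e0 = x 0 := by
      show x 2 + (EBW_e0 0 • (x 0 - x 2) + EBW_e0 1 • (x 1 - x 2)) = x 0
      simp [EBW_e0, EuclideanSpace.single_apply]
    have h1 : EBW_A (x 2) (x 0 - x 2) (x 1 - x 2) EBW_e1 = x 1 := by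
      show x 2 + (EBW_e1 0 • (x 0 - x 2) + EBW_e1 1 • (x 1 - x 2)) = x 1
      simp [EBW_e1, EuclideanSpace.single_apply]
    have h2 : EBW_A (x 2) (x 0 - x 2) (x 1 - x 2) 0 = x 2 := by
      show x 2 + ((0 : EuclideanSpace ℝ (Fin 2)) 0 • (x 0 - x 2)
        + (0 : EuclideanSpace ℝ (Fin 2)) 1 • (x 1 - x 2)) = x 2
      simp
    rw [h0, h1, h2]
    ext y
    simp only [Set.mem_range, Set.mem_insert_iff, Set.mem_singleton_iff]
    constructor
    · rintro ⟨i, rfl⟩; fin_cases i <;> simp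
    · rintro (rfl | rfl | rfl)
      exacts [⟨0, rfl⟩, ⟨1, rfl⟩, ⟨2, rfl⟩]
  -- derivative
  have hder : ∀ p ∈ EBW_T0, HasFDerivWithinAt (⇑(EBW_A (x 2) (x 0 - x 2) (x 1 - x 2)))
      ((EBW_L (x 0 - x 2) (x 1 - x 2)).toContinuousLinearMap) EBW_T0 p := by
    intro p _
    exact (((EBW_L (x 0 - x 2) (x 1 - x 2)).toContinuousLinearMap.hasFDerivAt).const_add
      (x 2)).hasFDerivWithinAt
  have hdet : ((EBW_L (x 0 - x 2) (x 1 - x 2)).toContinuousLinearMap).det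
      = LinearMap.det (EBW_L (x 0 - x 2) (x 1 - x 2)) := by
    simp [ContinuousLinearMap.det]
  -- change of variables
  rw [himg, MeasureTheory.integral_image_eq_integral_abs_det_fderiv_smul volume EBW_T0_meas
    hder hAinj.injOn]
  -- pointwise simplification of the transformed integrand
  have hpt : ∀ p : EuclideanSpace ℝ (Fin 2),
      |((EBW_L (x 0 - x 2) (x 1 - x 2)).toContinuousLinearMap).det|
          • ⟪(6 * lam a (EBW_A (x 2) (x 0 - x 2) (x 1 - x 2) p)
                * lam b (EBW_A (x 2) (x 0 - x 2) (x 1 - x 2) p)) • (x b - x a),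
              lam c (EBW_A (x 2) (x 0 - x 2) (x 1 - x 2) p) • g d
                - lam d (EBW_A (x 2) (x 0 - x 2) (x 1 - x 2) p) • g c⟫
        = (|LinearMap.det (EBW_L (x 0 - x 2) (x 1 - x 2))| * (6 * e))
            * (p 0 * p 1 * (1 - p 0 - p 1)) := by
    intro p
    rw [smul_eq_mul, hdet, hF, hlamA a p, hlamA b p, hlamA c p, hlamA d p, hkey (p 0) (p 1)]
    ring
  rw [MeasureTheory.setIntegral_congr_fun EBW_T0_meas (fun p _ => hpt p),
    MeasureTheory.integral_const_mul]
  have htr : ∫ p in EBW_T0, (p 0 * p 1 * (1 - p 0 - p 1)) = 1/120 :=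
    (EBW_transfer (fun p => p 0 * p 1 * (1 - p 0 - p 1))).trans EBW_S_poly
  rw [htr]
  -- the volume of the image triangle
  have hvol : (volume (⇑(EBW_A (x 2) (x 0 - x 2) (x 1 - x 2)) '' EBW_T0)).toReal
      = |LinearMap.det (EBW_L (x 0 - x 2) (x 1 - x 2))| * (1/2) := by
    have h1 : ⇑(EBW_A (x 2) (x 0 - x 2) (x 1 - x 2)) '' EBW_T0
        = (fun y => x 2 + y) '' (⇑(EBW_L (x 0 - x 2) (x 1 - x 2)) '' EBW_T0) := by
      rw [← Set.image_comp]; rfl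
    rw [h1, EBW_vol_translate, Measure.addHaar_image_linearMap, ENNReal.toReal_mul,
      ENNReal.toReal_ofReal (abs_nonneg _), EBW_T0_volume]
  rw [hvol]
  rw [abs_mul, abs_mul, abs_mul, abs_abs, he,
    abs_of_nonneg (by norm_num : (0:ℝ) ≤ 1/120),
    abs_of_nonneg (by norm_num : (0:ℝ) ≤ 6)]
  ring
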